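/- For every positive integer n, T(n) ≤ C(n, ⌊n/2⌋), the central binomial coefficient of n. -/

import Mathlib

/-- `f (a₁,…,a_k)` defined by `f(a₁) = a₁`, `f(a₁,…,a_{i+1}) = (f(a₁,…,a_i) + 1) · a_{i+1}`. -/
def f (l : List ℕ) : ℕ := l.foldl (fun acc a => (acc + 1) * a) 0

/-- `T n` is the number of nonempty finite sequences of positive integers with `f A = n`,
with the additional convention `T 0 = 1`. -/
noncomputable def T : ℕ → ℕ
  | 0 => 1
  | n + 1 => Nat.card {l : List ℕ // l ≠ [] ∧ (∀ a ∈ l, 0 < a) ∧ f l = n + 1}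

lemma f_append (xs : List ℕ) (a : ℕ) : f (xs ++ [a]) = (f xs + 1) * a := by
  simp [f, List.foldl_append]

lemma length_le_f (l : List ℕ) (hpos : ∀ a ∈ l, 0 < a) : l.length ≤ f l := by
  induction l using List.reverseRecOn with
  | nil => simp [f]
  | append_singleton xs a ih =>
    have ha : 0 < a := hpos a (by simp)
    have := ih (fun b hb => hpos b (by simp [hb]))
    rw [f_append]
    calc (xs ++ [a]).length = xs.length + 1 := by simp
    _ ≤ f xs + 1 := by omega
    _ = (f xs + 1) * 1 := by ring
    _ ≤ (f xs + 1) * a := Nat.mul_le_mul_left _ ha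

lemma mem_le_f (l : List ℕ) (hpos : ∀ a ∈ l, 0 < a) : ∀ a ∈ l, a ≤ f l := by
  induction l using List.reverseRecOn with
  | nil => simp
  | append_singleton xs b ih =>
    intro a ha
    have hb : 0 < b := hpos b (by simp)
    rw [f_append]
    rcases List.mem_append.1 ha with h | h
    · have := ih (fun c hc => hpos c (by simp [hc])) a h
      calc a ≤ f xs := this
      _ ≤ (f xs + 1) * 1 := by omega
      _ ≤ (f xs + 1) * b := Nat.mul_le_mul_left _ hb
    · simp at h
      subst h
      calc a = 1 * a := (one_mul a).symm
      _ ≤ (f xs + 1) * a := Nat.mul_le_mul_right _ (by omega)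

lemma f_pos (l : List ℕ) (hne : l ≠ []) (hpos : ∀ a ∈ l, 0 < a) : 0 < f l := by
  have h1 := length_le_f l hpos
  have h2 : 0 < l.length := List.length_pos_iff.2 hne
  omega

lemma f_decomp (l : List ℕ) (hne : l ≠ []) :
    (f l.dropLast + 1) * (l.getLast hne) = f l := by
  conv_rhs => rw [← List.dropLast_append_getLast hne]
  rw [f_append]

/-- The set of positive lists with a given `f`-value, without the nonemptiness condition. -/
def W (m : ℕ) : Type := {l : List ℕ // (∀ a ∈ l, 0 < a) ∧ f l = m}

lemma finite_W (m : ℕ) : Finite (W m) := by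
  have hsub : {l : List ℕ | (∀ a ∈ l, 0 < a) ∧ f l = m} ⊆
      (fun L : List (Fin (m + 1)) => L.map Fin.val) '' {L | L.length ≤ m} := by
    rintro l ⟨hpos, hfl⟩
    have hlen : l.length ≤ m := hfl ▸ length_le_f l hpos
    have hmem : ∀ a ∈ l, a < m + 1 := fun a ha =>
      Nat.lt_succ_of_le (hfl ▸ mem_le_f l hpos a ha)
    refine ⟨l.attach.map (fun x => ⟨x.1, hmem x.1 x.2⟩), by simpa using hlen, ?_⟩
    simp [List.map_map, Function.comp]
  have : {l : List ℕ | (∀ a ∈ l, 0 < a) ∧ f l = m}.Finite :=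
    Set.Finite.subset (Set.Finite.image _ (List.finite_length_le _ m)) hsub
  exact this.to_subtype

instance (m : ℕ) : Finite (W m) := finite_W m

lemma card_W (m : ℕ) : Nat.card (W m) = T m := by
  cases m with
  | zero =>
    have huniq : ∀ x : W 0, x = ⟨[], by simp [f]⟩ := by
      rintro ⟨l, hpos, hfl⟩
      have hne : l = [] := by
        by_contra hne
        have := f_pos l hne hpos
        omega
      subst hne; rfl
    haveI : Unique (W 0) := ⟨⟨⟨[], by simp [f]⟩⟩, huniq⟩
    simp [T, Nat.card_unique]
  | succ n =>
    have e : W (n + 1) ≃ {l : List ℕ // l ≠ [] ∧ (∀ a ∈ l, 0 < a) ∧ f l = n + 1} := by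
      apply Equiv.subtypeEquivRight
      intro l
      constructor
      · rintro ⟨hpos, hfl⟩
        refine ⟨?_, hpos, hfl⟩
        rintro rfl
        simp [f] at hfl
      · rintro ⟨_, hpos, hfl⟩; exact ⟨hpos, hfl⟩
    rw [Nat.card_congr e]; rfl

lemma W_ne_nil {n : ℕ} (hn : 0 < n) (x : W n) : x.1 ≠ [] := by
  intro h
  have := x.2.2
  rw [h] at this
  simp [f] at this
  omega

lemma T_recursion (n : ℕ) (hn : 0 < n) : T n ≤ ∑ e ∈ n.divisors, T (e - 1) := by
  classical
  have hdvd : ∀ x : W n, (f x.1.dropLast + 1) ∈ n.divisors := by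
    intro x
    rw [Nat.mem_divisors]
    have := f_decomp x.1 (W_ne_nil hn x)
    rw [x.2.2] at this
    exact ⟨⟨_, this.symm⟩, hn.ne'⟩
  have hposdl : ∀ x : W n, ∀ a ∈ x.1.dropLast, 0 < a := by
    intro x a ha
    exact x.2.1 a (List.dropLast_sublist x.1 |>.mem ha)
  let Φ : W n → (Σ e : {x // x ∈ n.divisors}, W (e.1 - 1)) :=
    fun x => ⟨⟨f x.1.dropLast + 1, hdvd x⟩, ⟨x.1.dropLast, hposdl x, by simp⟩⟩
  have hΦ : Function.Injective Φ := by
    have retr : ∀ x : W n, ((Φ x).2.1 ++ [n / ((Φ x).1.1)]) = x.1 := by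
      intro x
      have hne := W_ne_nil hn x
      have hfa : (f x.1.dropLast + 1) * (x.1.getLast hne) = n := by
        rw [f_decomp x.1 hne, x.2.2]
      have hdiv : n / (f x.1.dropLast + 1) = x.1.getLast hne :=
        Nat.div_eq_of_eq_mul_right (by omega) hfa.symm
      show x.1.dropLast ++ [n / (f x.1.dropLast + 1)] = x.1
      rw [hdiv]
      exact List.dropLast_append_getLast hne
    intro x y hxy
    apply Subtype.ext
    rw [← retr x, ← retr y, hxy]
  haveI : ∀ e : {x // x ∈ n.divisors}, Fintype (W (e.1 - 1)) := fun e => Fintype.ofFinite _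
  haveI : Fintype (W n) := Fintype.ofFinite _
  calc T n = Nat.card (W n) := (card_W n).symm
  _ ≤ Nat.card (Σ e : {x // x ∈ n.divisors}, W (e.1 - 1)) :=
      Nat.card_le_card_of_injective Φ hΦ
  _ = ∑ e : {x // x ∈ n.divisors}, Nat.card (W (e.1 - 1)) := by
      rw [Nat.card_eq_fintype_card, Fintype.card_sigma]
      exact Finset.sum_congr rfl (fun e _ => (Nat.card_eq_fintype_card).symm)
  _ = ∑ e : {x // x ∈ n.divisors}, T (e.1 - 1) :=
      Finset.sum_congr rfl (fun e _ => card_W _)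
  _ = ∑ e ∈ n.divisors, T (e - 1) := Finset.sum_coe_sort n.divisors (fun e => T (e - 1))

-- numeric lemmas
lemma two_pow_le_choose (k : ℕ) : 2 ^ (k + 1) ≤ (2 * k + 1).choose k + 1 := by
  induction k with
  | zero => simp
  | succ k ih =>
    have h1 : (2 * (k + 1) + 1).choose (k + 1)
        = (2 * k + 2).choose (k + 1) + (2 * k + 2).choose k := by
      have h : 2 * (k + 1) + 1 = (2 * k + 2) + 1 := by ring
      rw [h, Nat.choose_succ_succ' (2 * k + 2) k]
      omega
    have h2 : (2 * k + 2).choose (k + 1) = 2 * (2 * k + 1).choose k := by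
      have h : (2 * k + 2) = (2 * k + 1) + 1 := by ring
      rw [h, Nat.choose_succ_succ' (2 * k + 1) k, Nat.choose_symm_half k]
      omega
    have h3 : 1 ≤ (2 * k + 2).choose k := Nat.choose_pos (by omega)
    have h4 : 2 ^ (k + 1 + 1) = 2 * 2 ^ (k + 1) := by ring
    omega

lemma choose_le_two_pow' (j : ℕ) : j.choose (j / 2) ≤ 2 ^ j := by
  calc j.choose (j / 2) ≤ ∑ m ∈ Finset.range (j + 1), j.choose m :=
        Finset.single_le_sum (fun i _ => Nat.zero_le _) (by simp [Nat.lt_succ_iff, Nat.div_le_self])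
  _ = 2 ^ j := Nat.sum_range_choose j

lemma sum_B_le (k : ℕ) : ∑ j ∈ Finset.range k, (j.choose (j / 2)) ≤ 2 ^ k - 1 := by
  induction k with
  | zero => simp
  | succ k ih =>
    rw [Finset.sum_range_succ]
    have h1 := choose_le_two_pow' k
    have h2 : 2 ^ (k + 1) = 2 * 2 ^ k := by ring
    have h3 : 1 ≤ 2 ^ k := Nat.one_le_two_pow
    omega

lemma step_ineq (m : ℕ) (hm : 2 ≤ m) :
    (m - 1).choose ((m - 1) / 2) + (2 ^ (m / 2) - 1) ≤ m.choose (m / 2) := by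
  rcases Nat.even_or_odd m with ⟨k, hk⟩ | ⟨k, hk⟩
  · -- m = 2k, k ≥ 1
    obtain ⟨j, rfl⟩ : ∃ j, k = j + 1 := ⟨k - 1, by omega⟩
    have hm2 : m = 2 * (j + 1) := by omega
    subst hm2
    have e1 : (2 * (j + 1)) / 2 = j + 1 := by omega
    have e2 : (2 * (j + 1) - 1) = 2 * j + 1 := by omega
    have e3 : (2 * j + 1) / 2 = j := by omega
    rw [e1, e2, e3]
    have pascal : (2 * (j + 1)).choose (j + 1)
        = (2 * j + 1).choose j + (2 * j + 1).choose (j + 1) := by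
      have h : 2 * (j + 1) = (2 * j + 1) + 1 := by ring
      rw [h, Nat.choose_succ_succ' (2 * j + 1) j]
    have hsym : (2 * j + 1).choose (j + 1) = (2 * j + 1).choose j := Nat.choose_symm_half j
    have hp := two_pow_le_choose j
    omega
  · -- m = 2k + 1, k ≥ 1
    have hk1 : 1 ≤ k := by omega
    obtain ⟨j, rfl⟩ : ∃ j, k = j + 1 := ⟨k - 1, by omega⟩
    have hm2 : m = 2 * (j + 1) + 1 := by omega
    subst hm2
    have e1 : (2 * (j + 1) + 1) / 2 = j + 1 := by omega
    have e2 : (2 * (j + 1) + 1 - 1) = 2 * (j + 1) := by omega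
    have e3 : (2 * (j + 1)) / 2 = j + 1 := by omega
    rw [e1, e2, e3]
    have pascal : (2 * (j + 1) + 1).choose (j + 1)
        = (2 * (j + 1)).choose (j + 1) + (2 * (j + 1)).choose j := by
      rw [Nat.choose_succ_succ' (2 * (j + 1)) j]
      omega
    have hmono : (2 * j + 1).choose j ≤ (2 * (j + 1)).choose j :=
      Nat.choose_le_choose j (by omega)
    have hp := two_pow_le_choose j
    omega

lemma T_le_aux : ∀ n : ℕ, T n ≤ n.choose (n / 2) := by
  intro n
  induction n using Nat.strong_induction_on with
  | _ n IH =>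
  rcases Nat.lt_or_ge n 2 with h2 | h2
  · interval_cases n
    · simp [T]
    · have hrec := T_recursion 1 (by omega)
      simp [Nat.divisors_one] at hrec
      simpa [T] using hrec
  · have hrec := T_recursion n (by omega)
    have hmem : n ∈ n.divisors := Nat.mem_divisors_self n (by omega)
    classical
    rw [← Finset.add_sum_erase _ _ hmem] at hrec
    -- bound the sum over proper divisors
    have hbound : ∑ e ∈ n.divisors.erase n, T (e - 1)
        ≤ ∑ j ∈ Finset.range (n / 2), j.choose (j / 2) := by
      have step1 : ∑ e ∈ n.divisors.erase n, T (e - 1)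
          ≤ ∑ e ∈ n.divisors.erase n, (e - 1).choose ((e - 1) / 2) := by
        apply Finset.sum_le_sum
        intro e he
        have he' : e ∈ n.divisors := Finset.mem_of_mem_erase he
        have hepos : 0 < e := Nat.pos_of_mem_divisors he'
        have := Nat.divisor_le he'
        exact IH (e - 1) (by omega)
      have step2 : ∑ e ∈ n.divisors.erase n, (e - 1).choose ((e - 1) / 2)
          = ∑ j ∈ (n.divisors.erase n).image (· - 1), j.choose (j / 2) := by
        rw [Finset.sum_image]
        intro x hx y hy hxy
        have hx' : 0 < x := Nat.pos_of_mem_divisors (Finset.mem_of_mem_erase hx)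
        have hy' : 0 < y := Nat.pos_of_mem_divisors (Finset.mem_of_mem_erase hy)
        simp only at hxy
        omega
      have step3 : (n.divisors.erase n).image (· - 1) ⊆ Finset.range (n / 2) := by
        intro j hj
        simp only [Finset.mem_image] at hj
        obtain ⟨e, he, rfl⟩ := hj
        have hne := Finset.ne_of_mem_erase he
        have he' : e ∈ n.divisors := Finset.mem_of_mem_erase he
        have hepos : 0 < e := Nat.pos_of_mem_divisors he'
        obtain ⟨c, hc⟩ := (Nat.mem_divisors.1 he').1
        have hc2 : 2 ≤ c := by
          rcases Nat.lt_or_ge c 2 with h | h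
          · interval_cases c
            · omega
            · omega
          · exact h
        have : e ≤ n / 2 := Nat.le_div_iff_mul_le (by omega) |>.2 (by nlinarith)
        simp only [Finset.mem_range]
        omega
      calc ∑ e ∈ n.divisors.erase n, T (e - 1)
          ≤ ∑ e ∈ n.divisors.erase n, (e - 1).choose ((e - 1) / 2) := step1
        _ = ∑ j ∈ (n.divisors.erase n).image (· - 1), j.choose (j / 2) := step2
        _ ≤ ∑ j ∈ Finset.range (n / 2), j.choose (j / 2) :=
            Finset.sum_le_sum_of_subset step3
    have hIH : T (n - 1) ≤ (n - 1).choose ((n - 1) / 2) := IH (n - 1) (by omega)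
    have hsum := sum_B_le (n / 2)
    have hstep := step_ineq n h2
    omega

theorem T_le_central_binom (n : ℕ) (hn : 0 < n) :
    T n ≤ n.choose (n / 2) := T_le_aux n
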